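/- Let η ∈ ℝ and define λ₃ : ℝ³ → ℝ by λ₃(u,v,w) = 2η(w − vu) + 4. Then λ₃ is differentiable, and for every U = (u,v,w) ∈ ℝ³ the directional derivative of λ₃ at U in the direction r₃(U) = (1,0,v−2) equals −4η: (fderiv λ₃ U)(1,0,v−2) = −4η. In particular, if η > 0 the third characteristic family of the Baiti–Jenssen system is genuinely nonlinear with genuine nonlinearity constant 4η (after reorienting the eigenvector field). -/

import Mathlib

/-- The third characteristic speed of the Baiti–Jenssen system with parameter `η`. -/
noncomputable def BJlambda3 (η : ℝ) : ℝ × ℝ × ℝ → ℝ :=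
  fun U => 2 * η * (U.2.2 - U.2.1 * U.1) + 4

private lemma bj_hasFDerivAt (η u v w : ℝ) :
    HasFDerivAt (BJlambda3 η)
      ((2 * η) • ((((ContinuousLinearMap.snd ℝ ℝ ℝ).comp
          (ContinuousLinearMap.snd ℝ ℝ (ℝ × ℝ))) -
        (v • ContinuousLinearMap.fst ℝ ℝ (ℝ × ℝ) +
          u • ((ContinuousLinearMap.fst ℝ ℝ ℝ).comp
            (ContinuousLinearMap.snd ℝ ℝ (ℝ × ℝ))))) : ℝ × ℝ × ℝ →L[ℝ] ℝ)) (u, v, w) := by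
  have h1 : HasFDerivAt (fun U : ℝ × ℝ × ℝ => U.1)
      (ContinuousLinearMap.fst ℝ ℝ (ℝ × ℝ)) (u, v, w) := hasFDerivAt_fst
  have h2 : HasFDerivAt (fun U : ℝ × ℝ × ℝ => U.2.1)
      ((ContinuousLinearMap.fst ℝ ℝ ℝ).comp
        (ContinuousLinearMap.snd ℝ ℝ (ℝ × ℝ))) (u, v, w) :=
    hasFDerivAt_fst.comp _ hasFDerivAt_snd
  have h3 : HasFDerivAt (fun U : ℝ × ℝ × ℝ => U.2.2)
      ((ContinuousLinearMap.snd ℝ ℝ ℝ).comp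
        (ContinuousLinearMap.snd ℝ ℝ (ℝ × ℝ))) (u, v, w) :=
    hasFDerivAt_snd.comp _ hasFDerivAt_snd
  have hmul := h2.mul h1
  have hsub := h3.sub hmul
  have := (hsub.const_mul (2 * η)).add_const 4
  convert this using 1
  all_goals rfl

theorem bj_gn3 (η : ℝ) :
    Differentiable ℝ (BJlambda3 η) ∧
    (∀ u v w : ℝ,
      fderiv ℝ (BJlambda3 η) (u, v, w) ((1 : ℝ), (0 : ℝ), v - 2) = -(4 * η)) ∧
    (0 < η → ∀ u v w : ℝ,
      0 < 4 * η ∧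
        4 * η ≤ |fderiv ℝ (BJlambda3 η) (u, v, w) ((1 : ℝ), (0 : ℝ), v - 2)|) := by
  have key : ∀ u v w : ℝ,
      fderiv ℝ (BJlambda3 η) (u, v, w) ((1 : ℝ), (0 : ℝ), v - 2) = -(4 * η) := by
    intro u v w
    rw [(bj_hasFDerivAt η u v w).fderiv]
    simp
    ring
  refine ⟨fun p => ((bj_hasFDerivAt η p.1 p.2.1 p.2.2).differentiableAt), key, ?_⟩
  intro hη u v w
  refine ⟨by linarith, ?_⟩
  rw [key u v w, abs_neg, abs_of_pos (by linarith)]
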